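/- (Well-definedness of the Coxeter element attached to a height function.) Let Γ be a finite simple graph and let a_1, …, a_n and b_1, …, b_n be two enumerations of the vertex set V such that for every edge {a, b} of Γ, a precedes b in the first enumeration if and only if a precedes b in the second. Then the compositions of reflections coincide: s_{a_1} ∘ s_{a_2} ∘ … ∘ s_{a_n} = s_{b_1} ∘ s_{b_2} ∘ … ∘ s_{b_n} as linear maps on ℂ^V. -/

import Mathlib

open Finset

/-- The reflection `s_a` on `ℂ^V` attached to a vertex `a` of a simple graph `G`:
it sends the basis vector `e_a` to `−e_a` and `e_b` to `e_b + I_{ab}·e_a` for `b ≠ a`,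
where `I` is the adjacency matrix.  In coordinates, `(s_a v)_c = v_c` for `c ≠ a` and
`(s_a v)_a = (∑_b I_{ab} v_b) − v_a`. -/
noncomputable def sRef {V : Type*} [Fintype V] [DecidableEq V]
    (G : SimpleGraph V) [DecidableRel G.Adj] (a : V) (v : V → ℂ) : V → ℂ :=
  fun c => if c = a then (∑ b, if G.Adj a b then v b else 0) - v a else v c

/-- The composition `s_{a₁} ∘ s_{a₂} ∘ … ∘ s_{aₙ}` of reflections along a list
`L = [a₁, …, aₙ]` of vertices (the reflection at the last entry is applied first). -/
noncomputable def compList {V : Type*} [Fintype V] [DecidableEq V]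
    (G : SimpleGraph V) [DecidableRel G.Adj] (L : List V) (v : V → ℂ) : V → ℂ :=
  L.foldr (fun a w => sRef G a w) v

/-- Reflections at distinct non-adjacent vertices commute. -/
lemma sRef_comm {V : Type*} [Fintype V] [DecidableEq V]
    (G : SimpleGraph V) [DecidableRel G.Adj] {a b : V} (hne : a ≠ b)
    (hab : ¬ G.Adj a b) (v : V → ℂ) :
    sRef G a (sRef G b v) = sRef G b (sRef G a v) := by
  have hba : ¬ G.Adj b a := fun h => hab h.symm
  funext c
  by_cases hca : c = a
  · have hcb : c ≠ b := fun h => hne (hca ▸ h ▸ rfl)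
    simp only [sRef, if_pos hca, if_neg hcb, if_neg hne, if_neg (Ne.symm hne)]
    congr 1
    apply Finset.sum_congr rfl
    intro z _
    by_cases hz : G.Adj a z
    · have hzb : z ≠ b := fun h => hab (h ▸ hz)
      simp [hz, hzb]
    · simp [hz]
  · by_cases hcb : c = b
    · simp only [sRef, if_pos hcb, if_neg hca, if_neg hne, if_neg (Ne.symm hne)]
      congr 1
      apply Finset.sum_congr rfl
      intro z _
      by_cases hz : G.Adj b z
      · have hza : z ≠ a := fun h => hba (h ▸ hz)
        simp [hz, hza]
      · simp [hz]
    · simp [sRef, hca, hcb]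

lemma compList_append_cons {V : Type*} [Fintype V] [DecidableEq V]
    (G : SimpleGraph V) [DecidableRel G.Adj] (a : V) (P S : List V)
    (hP : ∀ p ∈ P, ¬ G.Adj a p ∧ p ≠ a) (v : V → ℂ) :
    compList G (P ++ a :: S) v = sRef G a (compList G (P ++ S) v) := by
  induction P with
  | nil => rfl
  | cons p P ih =>
    have hp := hP p (List.mem_cons_self)
    have : compList G ((p :: P) ++ a :: S) v
        = sRef G p (sRef G a (compList G (P ++ S) v)) := by
      simp only [List.cons_append, compList, List.foldr_cons]
      rw [← compList, ← compList, ih (fun q hq => hP q (List.mem_cons_of_mem _ hq))]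
    rw [this, sRef_comm G hp.2 (fun h => hp.1 h.symm)]
    rfl

/-- Removing a middle element does not change the relative order of other elements. -/
lemma idx_lt_iff {V : Type*} [DecidableEq V] (P S : List V) (a x y : V)
    (hx : x ≠ a) (hy : y ≠ a) :
    (P ++ S).idxOf x < (P ++ S).idxOf y
      ↔ (P ++ a :: S).idxOf x < (P ++ a :: S).idxOf y := by
  by_cases hxP : x ∈ P
  · by_cases hyP : y ∈ P
    · rw [List.idxOf_append_of_mem hxP, List.idxOf_append_of_mem hyP,
        List.idxOf_append_of_mem hxP, List.idxOf_append_of_mem hyP]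
    · rw [List.idxOf_append_of_mem hxP, List.idxOf_append_of_mem hxP,
        List.idxOf_append_of_notMem hyP, List.idxOf_append_of_notMem hyP]
      have h1 : List.idxOf x P < P.length := List.idxOf_lt_length_iff.2 hxP
      constructor <;> intro _ <;> omega
  · by_cases hyP : y ∈ P
    · rw [List.idxOf_append_of_mem hyP, List.idxOf_append_of_mem hyP,
        List.idxOf_append_of_notMem hxP, List.idxOf_append_of_notMem hxP]
      have h1 : List.idxOf y P < P.length := List.idxOf_lt_length_iff.2 hyP
      constructor <;> intro h <;> omega
    · rw [List.idxOf_append_of_notMem hxP, List.idxOf_append_of_notMem hxP,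
        List.idxOf_append_of_notMem hyP, List.idxOf_append_of_notMem hyP,
        List.idxOf_cons_ne _ (Ne.symm hx), List.idxOf_cons_ne _ (Ne.symm hy)]
      omega

lemma main_aux {V : Type*} [Fintype V] [DecidableEq V]
    (G : SimpleGraph V) [DecidableRel G.Adj] :
    ∀ (L₁ L₂ : List V), L₁.Nodup → L₂.Perm L₁ →
      (∀ a b : V, G.Adj a b → a ∈ L₁ → b ∈ L₁ →
        (L₁.idxOf a < L₁.idxOf b ↔ L₂.idxOf a < L₂.idxOf b)) →
      ∀ v : V → ℂ, compList G L₁ v = compList G L₂ v := by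
  intro L₁
  induction L₁ with
  | nil =>
    intro L₂ _ hperm _ v
    rw [List.perm_nil.1 hperm]
  | cons a T ih =>
    intro L₂ hnd hperm hprec v
    have haT : a ∉ T := (List.nodup_cons.1 hnd).1
    have hTnd : T.Nodup := (List.nodup_cons.1 hnd).2
    have hL₂nd : L₂.Nodup := hperm.symm.nodup hnd
    have haL₂ : a ∈ L₂ := hperm.mem_iff.2 (List.mem_cons_self)
    obtain ⟨P, S, rfl⟩ := List.append_of_mem haL₂
    have hmid := List.nodup_middle.1 hL₂nd
    have haPS : a ∉ P ++ S := (List.nodup_cons.1 hmid).1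
    have haP : a ∉ P := fun h => haPS (List.mem_append_left _ h)
    have hP : ∀ p ∈ P, ¬ G.Adj a p ∧ p ≠ a := by
      intro p hpP
      have hpa : p ≠ a := fun h => haP (h ▸ hpP)
      refine ⟨fun hadj => ?_, hpa⟩
      have hpL₂ : p ∈ P ++ a :: S := List.mem_append_left _ hpP
      have hpT : p ∈ T := by
        have := hperm.subset hpL₂
        rcases List.mem_cons.1 this with h | h
        · exact absurd h hpa
        · exact h
      have h1 : (a :: T).idxOf a < (a :: T).idxOf p := by
        rw [List.idxOf_cons_self, List.idxOf_cons_ne _ (Ne.symm hpa)]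
        exact Nat.succ_pos _
      have h2 := (hprec a p hadj (List.mem_cons_self)
        (List.mem_cons_of_mem a hpT)).1 h1
      rw [List.idxOf_append_of_notMem haP, List.idxOf_cons_self,
        List.idxOf_append_of_mem hpP] at h2
      have h3 : List.idxOf p P < P.length := List.idxOf_lt_length_iff.2 hpP
      omega
    have hperm' : (P ++ S).Perm T := by
      have h1 : (a :: (P ++ S)).Perm (a :: T) :=
        (List.perm_middle.symm).trans hperm
      exact (List.perm_cons a).1 h1
    have hprec' : ∀ x y : V, G.Adj x y → x ∈ T → y ∈ T →
        (T.idxOf x < T.idxOf y ↔ (P ++ S).idxOf x < (P ++ S).idxOf y) := by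
      intro x y hadj hxT hyT
      have hxa : x ≠ a := fun h => haT (h ▸ hxT)
      have hya : y ≠ a := fun h => haT (h ▸ hyT)
      have h0 := hprec x y hadj (List.mem_cons_of_mem a hxT)
        (List.mem_cons_of_mem a hyT)
      rw [List.idxOf_cons_ne _ (Ne.symm hxa), List.idxOf_cons_ne _ (Ne.symm hya)] at h0
      rw [Nat.succ_lt_succ_iff] at h0
      exact h0.trans (idx_lt_iff P S a x y hxa hya).symm
    have hIH : compList G T v = compList G (P ++ S) v :=
      ih (P ++ S) hTnd hperm' hprec' v
    rw [compList_append_cons G a P S hP v]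
    have hstep : compList G (a :: T) v = sRef G a (compList G T v) := rfl
    rw [hstep, hIH]

theorem coxeter_element_well_defined {V : Type*} [Fintype V] [DecidableEq V]
    (G : SimpleGraph V) [DecidableRel G.Adj]
    (L₁ L₂ : List V) (hL₁nd : L₁.Nodup) (hL₂nd : L₂.Nodup)
    (hL₁mem : ∀ v : V, v ∈ L₁) (hL₂mem : ∀ v : V, v ∈ L₂)
    (hprec : ∀ a b : V, G.Adj a b →
      (L₁.idxOf a < L₁.idxOf b ↔ L₂.idxOf a < L₂.idxOf b)) :
    ∀ v : V → ℂ, compList G L₁ v = compList G L₂ v := by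
  intro v
  have hperm : L₂.Perm L₁ :=
    List.perm_of_nodup_nodup_toFinset_eq hL₂nd hL₁nd (by
      ext x; simp [hL₁mem x, hL₂mem x])
  exact main_aux G L₁ L₂ hL₁nd hperm (fun a b hab _ _ => hprec a b hab) v
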